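/- Let p be a positive integer and let k, r, l be integers. Then ∏_{j=1}^{p} exp(2πi·k·{l/p}·({j·r·l/p} + {r·l/p} − {(j+1)·r·l/p})) = exp(2πi·k·r·l²/p), where {x} denotes the fractional part of x. (In the notation ω_k(a,b,c) = exp(2πi·k·{a}·({b}+{c}−{b+c})), this says that for the p-th root of unity ν = e^{2πi l/p} one has ∏_{j=1}^{p} ω_k(ν, ν^{jr}, ν^{r}) = e^{2πi k r l²/p}, which is the state-sum evaluation of the level-k U(1) Dijkgraaf–Witten invariant of the lens space on the Altschuler–Coste colouring of its standard triangulation.) -/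

import Mathlib

open Complex Finset

theorem altschuler_coste_state_sum (p : ℕ) (hp : 0 < p) (k r l : ℤ) :
    (∏ j ∈ Finset.Icc (1:ℕ) p,
        Complex.exp (2 * Real.pi * Complex.I * (k : ℂ) *
          ((Int.fract ((l : ℝ) / (p : ℝ)) : ℝ) : ℂ) *
          (((Int.fract ((j : ℝ) * (r : ℝ) * (l : ℝ) / (p : ℝ)) : ℝ) : ℂ) +
            ((Int.fract ((r : ℝ) * (l : ℝ) / (p : ℝ)) : ℝ) : ℂ) -
            ((Int.fract (((j : ℝ) + 1) * (r : ℝ) * (l : ℝ) / (p : ℝ)) : ℝ) : ℂ)))) =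
      Complex.exp (2 * Real.pi * Complex.I * (k : ℂ) * (r : ℂ) * (l : ℂ) ^ 2 / (p : ℂ)) := by
  have hpR : (p:ℝ) ≠ 0 := Nat.cast_ne_zero.mpr hp.ne'
  have hpC : (p:ℂ) ≠ 0 := Nat.cast_ne_zero.mpr hp.ne'
  set t : ℕ → ℝ := fun j => Int.fract ((j:ℝ) * (r:ℝ) * (l:ℝ) / (p:ℝ)) with ht
  set c : ℝ := Int.fract ((r:ℝ) * (l:ℝ) / (p:ℝ)) with hc
  have ht1 : t 1 = c := by simp [ht, hc]
  have htp1 : t (p+1) = c := by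
    have heq : (((p+1 : ℕ)):ℝ) * (r:ℝ) * (l:ℝ) / (p:ℝ)
        = ((r*l : ℤ):ℝ) + (r:ℝ) * (l:ℝ) / (p:ℝ) := by
      push_cast; field_simp
    simp only [ht, hc, heq, Int.fract_intCast_add]
  have htel : ∑ j ∈ Finset.Icc (1:ℕ) p, (t j - t (j+1)) = t 1 - t (p+1) := by
    rw [← Finset.Ico_add_one_right_eq_Icc, Finset.sum_Ico_eq_sum_range]
    have h := Finset.sum_range_sub' (fun i => t (1+i)) p
    simpa [Nat.add_comm 1] using h
  have hsum : ∑ j ∈ Finset.Icc (1:ℕ) p, (t j + c - t (j+1)) = (p:ℝ) * c := by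
    calc ∑ j ∈ Finset.Icc (1:ℕ) p, (t j + c - t (j+1))
        = ∑ j ∈ Finset.Icc (1:ℕ) p, ((t j - t (j+1)) + c) := by
          refine Finset.sum_congr rfl fun j _ => by ring
      _ = (∑ j ∈ Finset.Icc (1:ℕ) p, (t j - t (j+1))) + (Finset.Icc (1:ℕ) p).card • c := by
          rw [Finset.sum_add_distrib, Finset.sum_const]
      _ = (p:ℝ) * c := by
          rw [htel, ht1, htp1]
          simp [Nat.card_Icc, nsmul_eq_mul]
  rw [← Complex.exp_sum, Complex.exp_eq_exp_iff_exists_int]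
  set A : ℤ := ⌊(l:ℝ)/(p:ℝ)⌋ with hA
  set M : ℤ := ⌊(r:ℝ)*(l:ℝ)/(p:ℝ)⌋ with hM
  refine ⟨k*(p*A*M - A*(r*l) - l*M), ?_⟩
  have hnice : (∑ j ∈ Finset.Icc (1:ℕ) p,
        2 * (Real.pi:ℂ) * Complex.I * (k : ℂ) *
          ((Int.fract ((l : ℝ) / (p : ℝ)) : ℝ) : ℂ) *
          (((Int.fract ((j : ℝ) * (r : ℝ) * (l : ℝ) / (p : ℝ)) : ℝ) : ℂ) +
            ((Int.fract ((r : ℝ) * (l : ℝ) / (p : ℝ)) : ℝ) : ℂ) -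
            ((Int.fract (((j : ℝ) + 1) * (r : ℝ) * (l : ℝ) / (p : ℝ)) : ℝ) : ℂ)))
      = 2 * (Real.pi:ℂ) * Complex.I * (k : ℂ) *
          ((Int.fract ((l : ℝ) / (p : ℝ)) : ℝ) : ℂ) * (((p:ℝ) * c : ℝ) : ℂ) := by
    rw [← hsum, Complex.ofReal_sum, Finset.mul_sum]
    refine Finset.sum_congr rfl fun j _ => ?_
    simp only [ht, hc]
    push_cast
    ring
  rw [hnice]
  have h1 : ((Int.fract ((l:ℝ)/(p:ℝ)) : ℝ) : ℂ) = (l:ℂ)/(p:ℂ) - (A:ℂ) := by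
    rw [← Int.self_sub_floor, ← hA]; push_cast; ring
  have h2 : (((p:ℝ) * c : ℝ) : ℂ) = (r:ℂ)*(l:ℂ) - (p:ℂ)*(M:ℂ) := by
    rw [hc, ← Int.self_sub_floor, ← hM]
    push_cast
    field_simp
  rw [h1, h2]
  push_cast
  field_simp
  ring
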